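/- Let X be a finite nonempty set of points in the plane, let p be a point of X whose second coordinate is maximal in X (a topmost point), let q be a point of X whose second coordinate is minimal in X (a bottommost point), and let λ be the maximum over r ∈ X of the area of the triangle with vertices p, q, r (i.e. the planar Lebesgue measure of the convex hull of {p, q, r}). Then λ ≤ area(convexHull X) ≤ 4λ, where area(convexHull X) is the planar Lebesgue measure of the convex hull of X. -/

import Mathlib

open MeasureTheory Set ENNReal Pointwise

noncomputable abbrev E2 := EuclideanSpace ℝ (Fin 2)
noncomputable def bb : Module.Basis (Fin 2) ℝ E2 := PiLp.basisFun 2 ℝ (Fin 2)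
noncomputable def Δ : Set E2 := convexHull ℝ {0, bb 0, bb 1}

lemma bb_coords : (bb 0) 0 = 1 ∧ (bb 0) 1 = 0 ∧ (bb 1) 0 = 0 ∧ (bb 1) 1 = 1 := by
  simp [bb, PiLp.basisFun_apply]

lemma tri_mem {s t : ℝ} (hs : 0 ≤ s) (ht : 0 ≤ t) (hst : s + t ≤ 1) :
    s • bb 0 + t • bb 1 ∈ Δ := by
  have h0 : (0 : E2) ∈ Δ := subset_convexHull ℝ _ (by simp)
  have h1 : bb 0 ∈ Δ := subset_convexHull ℝ _ (by simp)
  have h2 : bb 1 ∈ Δ := subset_convexHull ℝ _ (by simp)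
  have hΔ : Convex ℝ Δ := convex_convexHull ℝ _
  rcases eq_or_lt_of_le (by positivity : (0:ℝ) ≤ s + t) with h | h
  · have hs0 : s = 0 := by linarith [ht]
    have ht0 : t = 0 := by linarith [hs]
    simpa [hs0, ht0] using h0
  · set σ := s + t with hσ
    have hm : (s/σ) • bb 0 + (t/σ) • bb 1 ∈ Δ := by
      apply hΔ.segment_subset h1 h2
      exact ⟨s/σ, t/σ, div_nonneg hs h.le, div_nonneg ht h.le, by field_simp; exact hσ.symm, rfl⟩
    have := hΔ.segment_subset hm h0
      ⟨σ, 1 - σ, h.le, by linarith, by ring, rfl⟩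
    have heq : σ • ((s/σ) • bb 0 + (t/σ) • bb 1) + (1 - σ) • (0:E2)
        = s • bb 0 + t • bb 1 := by
      rw [smul_zero, add_zero, smul_add, smul_smul, smul_smul,
        mul_div_cancel₀ _ h.ne', mul_div_cancel₀ _ h.ne']
    rwa [heq] at this

lemma vol_box (a b c d : ℝ) : volume {x : E2 | x 0 ∈ Icc a b ∧ x 1 ∈ Icc c d}
    = ENNReal.ofReal (b-a) * ENNReal.ofReal (d-c) := by
  have hmp := EuclideanSpace.volume_preserving_symm_measurableEquiv_toLp (Fin 2)
  have hs : {x : E2 | x 0 ∈ Icc a b ∧ x 1 ∈ Icc c d}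
      = (MeasurableEquiv.toLp 2 (Fin 2 → ℝ)).symm ⁻¹' (univ.pi ![Icc a b, Icc c d]) := by
    ext x
    simp [Fin.forall_fin_two]
  rw [hs, hmp.measure_preimage]
  · rw [volume_pi_pi]; simp [Fin.prod_univ_two, Real.volume_Icc]
  · exact (MeasurableSet.univ_pi (by
      intro i; fin_cases i <;> exact measurableSet_Icc)).nullMeasurableSet

lemma vol_delta : (1 : ℝ≥0∞) ≤ 2 * volume Δ := by
  obtain ⟨c00, c01, c10, c11⟩ := bb_coords
  set cc : E2 := bb 0 + bb 1 with hcc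
  have hsub : {x : E2 | x 0 ∈ Icc (0:ℝ) 1 ∧ x 1 ∈ Icc (0:ℝ) 1}
      ⊆ Δ ∪ ((fun x => cc - x) ⁻¹' Δ) := by
    rintro x ⟨⟨hs0, hs1⟩, ⟨ht0, ht1⟩⟩
    rcases le_or_gt (x 0 + x 1) 1 with h | h
    · left
      have : x = x 0 • bb 0 + x 1 • bb 1 := by
        ext i; fin_cases i <;>
          simp [PiLp.add_apply, PiLp.smul_apply, c00, c01, c10, c11]
      rw [this]; exact tri_mem hs0 ht0 h
    · right
      have hco : (cc - x) = (1 - x 0) • bb 0 + (1 - x 1) • bb 1 := by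
        ext i; fin_cases i <;>
          simp [hcc, PiLp.add_apply, PiLp.sub_apply, PiLp.smul_apply, c00, c01, c10, c11]
      show cc - x ∈ Δ
      rw [hco]
      exact tri_mem (by linarith) (by linarith) (by linarith)
  have hvb : volume {x : E2 | x 0 ∈ Icc (0:ℝ) 1 ∧ x 1 ∈ Icc (0:ℝ) 1} = 1 := by
    rw [vol_box]; norm_num
  have hpre : volume ((fun x => cc - x) ⁻¹' Δ) = volume Δ := by
    have : (fun x : E2 => cc - x) = (fun x => cc + x) ∘ (fun x => -x) := by
      ext x; simp [sub_eq_add_neg]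
    rw [this, Set.preimage_comp, Measure.measure_preimage_neg, measure_preimage_add]
  calc (1:ℝ≥0∞) = volume {x : E2 | x 0 ∈ Icc (0:ℝ) 1 ∧ x 1 ∈ Icc (0:ℝ) 1} := hvb.symm
    _ ≤ volume (Δ ∪ ((fun x => cc - x) ⁻¹' Δ)) := measure_mono hsub
    _ ≤ volume Δ + volume ((fun x => cc - x) ⁻¹' Δ) := measure_union_le _ _
    _ = 2 * volume Δ := by rw [hpre, two_mul]

lemma tri_vol0 (a c : E2) : volume (convexHull ℝ {(0:E2), a, c})
    = ENNReal.ofReal |a 0 * c 1 - a 1 * c 0| * volume Δ := by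
  obtain ⟨c00, c01, c10, c11⟩ := bb_coords
  set L : E2 →ₗ[ℝ] E2 := bb.constr ℝ ![a, c] with hL
  have himg : L '' {0, bb 0, bb 1} = {0, a, c} := by
    rw [Set.image_insert_eq, Set.image_insert_eq, Set.image_singleton]
    have h0 : L 0 = 0 := map_zero L
    have h1 : L (bb 0) = a := by simp [hL]
    have h2 : L (bb 1) = c := by simp [hL]
    rw [h0, h1, h2]
  have hdet : LinearMap.det L = a 0 * c 1 - a 1 * c 0 := by
    rw [← LinearMap.det_toMatrix bb L]
    have hm : LinearMap.toMatrix bb bb L = Matrix.of ![![a 0, c 0], ![a 1, c 1]] := by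
      ext i j
      rw [LinearMap.toMatrix_apply]
      fin_cases i <;> fin_cases j <;>
        simp [hL, bb.constr_basis, bb, PiLp.basisFun_repr]
    rw [hm, Matrix.det_fin_two]
    simp [mul_comm]
  calc volume (convexHull ℝ {(0:E2), a, c}) = volume (L '' (convexHull ℝ {0, bb 0, bb 1})) := by
        rw [L.image_convexHull, himg]
    _ = ENNReal.ofReal |LinearMap.det L| * volume Δ := by
        rw [Measure.addHaar_image_linearMap]; rfl
    _ = _ := by rw [hdet]

lemma tri_vol (p q r : E2) : volume (convexHull ℝ {p, q, r})
    = ENNReal.ofReal |(p 0 - q 0) * (r 1 - q 1) - (p 1 - q 1) * (r 0 - q 0)| * volume Δ := by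
  have hset : ({p, q, r} : Set E2) = q +ᵥ ({0, p - q, r - q} : Set E2) := by
    rw [Set.vadd_set_insert, Set.vadd_set_insert, Set.vadd_set_singleton]
    simp only [vadd_eq_add, add_zero, add_sub_cancel]
    exact (Set.insert_comm q p {r}).symm
  have hvadd : q +ᵥ (convexHull ℝ ({0, p - q, r - q} : Set E2))
      = (fun x => -q + x) ⁻¹' (convexHull ℝ ({0, p - q, r - q} : Set E2)) := by
    ext x
    exact Set.mem_vadd_set_iff_neg_vadd_mem
  rw [hset, convexHull_vadd, hvadd, measure_preimage_add, tri_vol0]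
  simp [PiLp.sub_apply]

/-- For a finite nonempty planar point set `X` with topmost point `p` and bottommost
point `q`, the maximum area `λ` of a triangle `p q r` with `r ∈ X` satisfies
`λ ≤ area(convexHull X) ≤ 4 λ`. -/
theorem max_triangle_area_approximates_hull_area
    (X : Finset (EuclideanSpace ℝ (Fin 2))) (hX : X.Nonempty)
    (p q : EuclideanSpace ℝ (Fin 2)) (hp : p ∈ X) (hq : q ∈ X)
    (hptop : ∀ x ∈ X, x 1 ≤ p 1) (hqbot : ∀ x ∈ X, q 1 ≤ x 1) :
    (⨆ r ∈ X, volume (convexHull ℝ ({p, q, r} : Set (EuclideanSpace ℝ (Fin 2))))) ≤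
        volume (convexHull ℝ (X : Set (EuclideanSpace ℝ (Fin 2)))) ∧
      volume (convexHull ℝ (X : Set (EuclideanSpace ℝ (Fin 2)))) ≤
        4 * ⨆ r ∈ X, volume (convexHull ℝ ({p, q, r} : Set (EuclideanSpace ℝ (Fin 2)))) := by
  classical
  constructor
  · refine iSup₂_le fun r hr => measure_mono (convexHull_mono ?_)
    intro x hx
    simp only [Set.mem_insert_iff, Set.mem_singleton_iff] at hx
    rcases hx with rfl | rfl | rfl
    exacts [Finset.mem_coe.mpr hp, Finset.mem_coe.mpr hq, Finset.mem_coe.mpr hr]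
  -- upper bound
  set Dfun : EuclideanSpace ℝ (Fin 2) → ℝ :=
    fun x => (p 0 - q 0) * (x 1 - q 1) - (p 1 - q 1) * (x 0 - q 0) with hDfun
  obtain ⟨r₀, hr₀X, hr₀max⟩ := X.exists_max_image (fun r => |Dfun r|) hX
  set h : ℝ := |Dfun r₀| with hh
  have hh0 : 0 ≤ h := abs_nonneg _
  have hT : volume (convexHull ℝ ({p, q, r₀} : Set E2)) = ENNReal.ofReal h * volume Δ := by
    rw [tri_vol]
  have hTsup : 4 * volume (convexHull ℝ ({p, q, r₀} : Set E2)) ≤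
      4 * ⨆ r ∈ X, volume (convexHull ℝ ({p, q, r} : Set (EuclideanSpace ℝ (Fin 2)))) :=
    mul_le_mul_right
      (le_iSup₂ (f := fun r (_ : r ∈ X) =>
        volume (convexHull ℝ ({p, q, r} : Set (EuclideanSpace ℝ (Fin 2))))) r₀ hr₀X) 4
  refine le_trans ?_ hTsup
  have hH0 : 0 ≤ p 1 - q 1 := by have := hqbot p hp; linarith
  rcases eq_or_lt_of_le hH0 with hH | hH
  · -- degenerate case: all points on a horizontal line
    set ℓ : E2 →ₗ[ℝ] ℝ := bb.coord 1 with hℓdef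
    have hℓ : ∀ x : E2, ℓ x = x 1 := fun x => by
      simp [hℓdef, Module.Basis.coord_apply, bb, PiLp.basisFun_repr]
    have hker : {x : E2 | x 1 = 0} = (LinearMap.ker ℓ : Submodule ℝ E2) := by
      ext x; simp [LinearMap.mem_ker, hℓ]
    have hkerne : LinearMap.ker ℓ ≠ ⊤ := by
      intro htop
      have h1 : ℓ (bb 1) = 0 := by
        rw [LinearMap.ker_eq_top] at htop; rw [htop]; rfl
      rw [hℓ] at h1
      obtain ⟨-, -, -, c11⟩ := bb_coords
      rw [c11] at h1; norm_num at h1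
    have hline : volume {x : E2 | x 1 = p 1} = 0 := by
      have hpre : {x : E2 | x 1 = p 1} = (fun x => -p + x) ⁻¹' {x : E2 | x 1 = 0} := by
        ext x
        simp only [Set.mem_setOf_eq, Set.mem_preimage, PiLp.add_apply, PiLp.neg_apply]
        constructor <;> intro hx <;> linarith
      rw [hpre, measure_preimage_add, hker]
      exact Measure.addHaar_submodule volume _ hkerne
    have hzero : volume (convexHull ℝ (X : Set (EuclideanSpace ℝ (Fin 2)))) = 0 := by
      refine measure_mono_null ?_ hline
      refine convexHull_min ?_ ?_
      · intro x hx
        have h1 := hptop x (Finset.mem_coe.mp hx)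
        have h2 := hqbot x (Finset.mem_coe.mp hx)
        simp only [Set.mem_setOf_eq]; linarith
      · have : {x : E2 | x 1 = p 1} = {x : E2 | ℓ x = p 1} := by
          ext x; simp [hℓ]
        rw [this]
        exact convex_hyperplane ℓ.isLinear (p 1)
    rw [hzero]
    exact zero_le
  · -- main case: p strictly above q
    set H : ℝ := p 1 - q 1 with hHdef
    set v : E2 := H⁻¹ • (p - q) with hvdef
    obtain ⟨c00, c01, c10, c11⟩ := bb_coords
    have hv0 : v 0 = H⁻¹ * (p 0 - q 0) := by simp [hvdef, PiLp.smul_apply, PiLp.sub_apply]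
    have hv1 : v 1 = 1 := by
      simp [hvdef, PiLp.smul_apply, PiLp.sub_apply, ← hHdef]
      exact inv_mul_cancel₀ hH.ne'
    set LS : E2 →ₗ[ℝ] E2 := bb.constr ℝ ![bb 0, v] with hLS
    have hLS0 : LS (bb 0) = bb 0 := by simp [hLS]
    have hLS1 : LS (bb 1) = v := by simp [hLS]
    have hdetS : LinearMap.det LS = 1 := by
      rw [← LinearMap.det_toMatrix bb LS]
      have hm : LinearMap.toMatrix bb bb LS = Matrix.of ![![1, v 0], ![0, 1]] := by
        ext i j
        rw [LinearMap.toMatrix_apply]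
        fin_cases i <;> fin_cases j <;>
          simp [hLS, bb.constr_basis, bb, PiLp.basisFun_repr, c00, c01, hv1]
      rw [hm, Matrix.det_fin_two]
      simp
    set f : E2 → ℝ := fun x => (p 0 - q 0) * x 1 - (p 1 - q 1) * x 0 with hfdef
    have hDf : ∀ x, Dfun x = f x - f q := fun x => by simp [hDfun, hfdef]; ring
    set S : Set E2 := {x | q 1 ≤ x 1 ∧ x 1 ≤ p 1 ∧ f x ≤ f q + h ∧ f q - h ≤ f x} with hSdef
    have hXS : (X : Set E2) ⊆ S := by
      intro x hx
      have h1 := hptop x (Finset.mem_coe.mp hx)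
      have h2 := hqbot x (Finset.mem_coe.mp hx)
      have h3 := hr₀max x (Finset.mem_coe.mp hx)
      have h4 := abs_le.mp h3
      have h5 := hDf x
      exact ⟨h2, h1, by linarith [h4.2], by linarith [h4.1]⟩
    have hlin : IsLinearMap ℝ (fun x : E2 => x 1) := ⟨fun _ _ => rfl, fun _ _ => rfl⟩
    have hlinf : IsLinearMap ℝ f := by
      constructor
      · intro x y
        show (p 0 - q 0) * (x + y) 1 - (p 1 - q 1) * (x + y) 0 = _
        simp only [PiLp.add_apply]; ring
      · intro c x
        show (p 0 - q 0) * (c • x) 1 - (p 1 - q 1) * (c • x) 0 = _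
        simp only [PiLp.smul_apply, smul_eq_mul]; ring
    have hScvx : Convex ℝ S := by
      have : S = {x : E2 | q 1 ≤ x 1} ∩ ({x : E2 | x 1 ≤ p 1} ∩
          ({x : E2 | f x ≤ f q + h} ∩ {x : E2 | f q - h ≤ f x})) := by
        ext x
        simp only [hSdef, Set.mem_setOf_eq, Set.mem_inter_iff]
      rw [this]
      exact (convex_halfSpace_ge hlin _).inter ((convex_halfSpace_le hlin _).inter
        ((convex_halfSpace_le hlinf _).inter (convex_halfSpace_ge hlinf _)))
    set B : Set E2 := {y : E2 | y 0 ∈ Icc (-(h/H)) (h/H) ∧ y 1 ∈ Icc 0 H} with hBdef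
    have hSsub : S ⊆ (fun y => q + LS y) '' B := by
      rintro x ⟨hx1, hx2, hx3, hx4⟩
      set a : ℝ := -(Dfun x) / H with hadef
      set t : ℝ := x 1 - q 1 with htdef
      refine ⟨a • bb 0 + t • bb 1, ⟨?_, ?_⟩, ?_⟩
      · have ha0 : (a • bb 0 + t • bb 1) 0 = a := by
          simp [PiLp.add_apply, PiLp.smul_apply, c00, c10]
        rw [ha0]
        have hDx := hDf x
        constructor
        · rw [hadef, neg_div, neg_le_neg_iff, div_le_div_iff_of_pos_right hH]
          linarith
        · rw [hadef, neg_div, neg_le, ← neg_div, div_le_div_iff_of_pos_right hH]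
          linarith
      · have ht1 : (a • bb 0 + t • bb 1) 1 = t := by
          simp [PiLp.add_apply, PiLp.smul_apply, c01, c11]
        rw [ht1, Set.mem_Icc, htdef, hHdef]
        exact ⟨by linarith, by linarith⟩
      · have hLSy : LS (a • bb 0 + t • bb 1) = a • bb 0 + t • v := by
          rw [map_add, LinearMap.map_smul, LinearMap.map_smul, hLS0, hLS1]
        show q + LS (a • bb 0 + t • bb 1) = x
        rw [hLSy]
        ext i
        fin_cases i
        · show q 0 + (a • bb 0 + t • v) 0 = x 0
          simp only [PiLp.add_apply, PiLp.smul_apply, smul_eq_mul, c00, hv0]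
          rw [hadef, hDfun]
          field_simp
          ring
        · show q 1 + (a • bb 0 + t • v) 1 = x 1
          simp only [PiLp.add_apply, PiLp.smul_apply, smul_eq_mul, c01, hv1]
          rw [htdef]; ring
    have hvol : volume ((fun y => q + LS y) '' B) = ENNReal.ofReal (2 * h) := by
      have himg : (fun y => q + LS y) '' B = (fun z => q + z) '' (LS '' B) := by
        rw [Set.image_image]
      rw [himg, Set.image_add_left, measure_preimage_add,
        Measure.addHaar_image_linearMap, hdetS]
      have hB : volume B = ENNReal.ofReal (h/H - -(h/H)) * ENNReal.ofReal (H - 0) := by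
        rw [hBdef]; exact vol_box _ _ _ _
      rw [hB]
      rw [← ENNReal.ofReal_mul (by linarith [div_nonneg hh0 hH.le] : (0:ℝ) ≤ h/H - -(h/H))]
      have : (h / H - -(h / H)) * (H - 0) = 2 * h := by field_simp; ring
      rw [this]
      simp
    calc volume (convexHull ℝ (X : Set (EuclideanSpace ℝ (Fin 2))))
        ≤ volume ((fun y => q + LS y) '' B) :=
          measure_mono (le_trans (convexHull_min hXS hScvx) hSsub)
      _ = ENNReal.ofReal (2 * h) := hvol
      _ = (ENNReal.ofReal h * 1) * 2 := by
          rw [ENNReal.ofReal_mul (by norm_num : (0:ℝ) ≤ 2)]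
          simp [mul_comm]
      _ ≤ (ENNReal.ofReal h * (2 * volume Δ)) * 2 :=
          mul_le_mul_left (mul_le_mul_right vol_delta _) 2
      _ = 4 * (ENNReal.ofReal h * volume Δ) := by ring
      _ = 4 * volume (convexHull ℝ ({p, q, r₀} : Set E2)) := by rw [hT]
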